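/- arXiv:1701.01160 — 2 statements merged into one kernel-verified Lean document; each statement's English description precedes it below -/
import Mathlib

section
/- Let n ≥ 2 be an integer such that n + 1 is a prime number. Then the polynomial f_{1,n}(X) is irreducible in ℤ[X]. -/
open Polynomial

/-- `f1 n = X^(n-1) + 2 X^(n-2) + ⋯ + (n-1) X + n = Σ_{k=1}^n k · X^(n-k)` over `ℤ`. -/
noncomputable def f1 (n : ℕ) : Polynomial ℤ :=
  ∑ k ∈ Finset.Icc 1 n, C (k : ℤ) * X ^ (n - k)

lemma f1_succ (n : ℕ) (hn : 1 ≤ n) : f1 (n + 1) = X * f1 n + C ((n : ℤ) + 1) := by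
  unfold f1
  rw [Finset.sum_Icc_succ_top (by omega)]
  rw [Finset.mul_sum]
  congr 1
  · refine Finset.sum_congr rfl fun k hk => ?_
    rw [Finset.mem_Icc] at hk
    have : n + 1 - k = (n - k) + 1 := by omega
    rw [this]
    ring
  · simp

lemma key_identity (n : ℕ) (hn : 1 ≤ n) :
    (X - C 1) ^ 2 * f1 n = X ^ (n + 1) - C ((n : ℤ) + 1) * X + C (n : ℤ) := by
  induction n with
  | zero => omega
  | succ m ih =>
    rcases Nat.eq_or_lt_of_le hn with h | h
    · have : m = 0 := by omega
      subst this
      unfold f1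
      simp [Finset.Icc_self]
      ring
    · have hm : 1 ≤ m := by omega
      rw [f1_succ m hm, mul_add, mul_left_comm, ih hm]
      push_cast
      simp only [map_add, map_one]
      ring

/-- The shifted polynomial written with binomial coefficients. -/
noncomputable def g1 (n : ℕ) : Polynomial ℤ :=
  ∑ i ∈ Finset.range n, C (((n + 1).choose (i + 2) : ℕ) : ℤ) * X ^ i

lemma X_sq_mul_g1 (n : ℕ) :
    X ^ 2 * g1 n = (X + 1) ^ (n + 1) - C ((n : ℤ) + 1) * X - C 1 := by
  have hbin : ((X : ℤ[X]) + 1) ^ (n + 1)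
      = ∑ k ∈ Finset.range (n + 2), X ^ k * C (((n+1).choose k : ℕ) : ℤ) := by
    rw [add_pow]
    simp [mul_comm]
  rw [hbin, Finset.sum_range_succ' _ (n+1), Finset.sum_range_succ' _ n]
  unfold g1
  rw [Finset.mul_sum]
  have : ∀ i ∈ Finset.range n,
      X ^ 2 * (C (((n + 1).choose (i + 2) : ℕ) : ℤ) * X ^ i)
      = X ^ (i + 1 + 1) * C (((n+1).choose (i + 1 + 1) : ℕ) : ℤ) := by
    intro i _; ring
  rw [Finset.sum_congr rfl this]
  simp
  ring

lemma comp_eq (n : ℕ) (hn : 1 ≤ n) : (f1 n).comp (X + C 1) = g1 n := by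
  have h := key_identity n hn
  have h2 := congrArg (fun p : ℤ[X] => p.comp (X + C 1)) h
  simp only [mul_comp, sub_comp, add_comp, pow_comp, X_comp, C_comp] at h2
  have hX2 : ((X : ℤ[X]) + C 1 - C 1) ^ 2 = X ^ 2 := by ring
  rw [hX2] at h2
  have h3 : X ^ 2 * (f1 n).comp (X + C 1) = X ^ 2 * g1 n := by
    rw [h2, X_sq_mul_g1]
    simp only [map_add, map_one]
    ring
  exact mul_left_cancel₀ (pow_ne_zero 2 X_ne_zero) h3

lemma g1_coeff (n : ℕ) (j : ℕ) :
    (g1 n).coeff j = if j < n then (((n + 1).choose (j + 2) : ℕ) : ℤ) else 0 := by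
  unfold g1
  rw [finset_sum_coeff]
  simp only [coeff_C_mul, coeff_X_pow, mul_ite, mul_one, mul_zero]
  rw [Finset.sum_ite_eq (Finset.range n) j]
  simp [Finset.mem_range]

lemma g1_natDegree (n : ℕ) (hn : 1 ≤ n) : (g1 n).natDegree = n - 1 := by
  have hle : (g1 n).natDegree ≤ n - 1 := by
    unfold g1
    refine (natDegree_sum_le _ _).trans ?_
    rw [Finset.fold_max_le]
    constructor
    · omega
    · intro i hi
      simp only [Finset.mem_range] at hi
      refine (natDegree_C_mul_le _ _).trans ?_
      rw [natDegree_X_pow]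
      omega
  have hco : (g1 n).coeff (n - 1) = 1 := by
    rw [g1_coeff, if_pos (by omega : n - 1 < n)]
    have : n - 1 + 2 = n + 1 := by omega
    rw [this, Nat.choose_self, Nat.cast_one]
  have hge : n - 1 ≤ (g1 n).natDegree :=
    le_natDegree_of_ne_zero (by rw [hco]; norm_num)
  omega

lemma g1_monic (n : ℕ) (hn : 1 ≤ n) : (g1 n).Monic := by
  unfold Monic leadingCoeff
  rw [g1_natDegree n hn, g1_coeff, if_pos (by omega : n - 1 < n)]
  have : n - 1 + 2 = n + 1 := by omega
  rw [this, Nat.choose_self, Nat.cast_one]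

lemma not_sq_dvd (n : ℕ) (hn : 1 ≤ n) : ¬ ((n + 1) ^ 2 ∣ (n + 1).choose 2) := by
  intro h
  have hdvd2 : 2 ∣ (n + 1) * n := by
    rw [mul_comm]
    exact (Nat.even_mul_succ_self n).two_dvd
  have h2 : 2 * (n + 1).choose 2 = (n + 1) * n := by
    rw [Nat.choose_two_right]
    simp only [Nat.add_sub_cancel]
    rw [mul_comm 2 _, Nat.div_mul_cancel hdvd2]
  have h3 : (n + 1) ^ 2 ∣ (n + 1) * n := by
    rw [← h2]
    exact dvd_mul_of_dvd_right h 2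
  rw [pow_two] at h3
  have h4 : (n + 1) ∣ n := (mul_dvd_mul_iff_left (by omega : n + 1 ≠ 0)).mp h3
  have := Nat.le_of_dvd (by omega) h4
  omega

lemma g1_irreducible (n : ℕ) (hn : 2 ≤ n) (hp : (n + 1).Prime) : Irreducible (g1 n) := by
  set 𝓟 : Ideal ℤ := Ideal.span {((n : ℤ) + 1)} with h𝓟
  have hprime : Prime ((n : ℤ) + 1) := by
    have : Prime (((n + 1 : ℕ) : ℤ)) := by
      rw [Int.prime_iff_natAbs_prime]
      exact hp
    push_cast at this
    exact this
  have hPprime : 𝓟.IsPrime := (Ideal.span_singleton_prime hprime.ne_zero).mpr hprime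
  have heis : (g1 n).IsEisensteinAt 𝓟 := by
    constructor
    · rw [(g1_monic n (by omega)).leadingCoeff, h𝓟, Ideal.mem_span_singleton]
      intro hd
      have := Int.le_of_dvd one_pos hd
      omega
    · intro i hi
      rw [g1_natDegree n (by omega)] at hi
      rw [g1_coeff, if_pos (by omega : i < n), h𝓟, Ideal.mem_span_singleton]
      have hd : (n + 1) ∣ (n + 1).choose (i + 2) :=
        hp.dvd_choose_self (by omega) (by omega)
      exact_mod_cast Int.natCast_dvd_natCast.mpr hd
    · rw [g1_coeff, if_pos (by omega : 0 < n), h𝓟, Ideal.span_singleton_pow,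
        Ideal.mem_span_singleton]
      intro hd
      apply not_sq_dvd n (by omega)
      have h2 : (((n + 1) : ℕ) : ℤ) ^ 2 ∣ (((n + 1).choose 2 : ℕ) : ℤ) := by
        push_cast
        exact_mod_cast hd
      exact_mod_cast h2
  refine heis.irreducible hPprime (g1_monic n (by omega)).isPrimitive ?_
  rw [g1_natDegree n (by omega)]
  omega

/-- If `n ≥ 2` and `n + 1` is prime, then `f1 n` is irreducible in `ℤ[X]`. -/
theorem stmt3 (n : ℕ) (hn : 2 ≤ n) (hp : (n + 1).Prime) : Irreducible (f1 n) := by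
  have hcomp : algEquivAevalXAddC (1 : ℤ) (f1 n) = g1 n := by
    have : algEquivAevalXAddC (1 : ℤ) (f1 n) = (f1 n).comp (X + C 1) := by
      simp [algEquivAevalXAddC, ← comp_eq_aeval]
    rw [this, comp_eq n (by omega)]
  have := g1_irreducible n hn hp
  rw [← hcomp] at this
  exact (MulEquiv.irreducible_iff (algEquivAevalXAddC (1 : ℤ))).mp this
end

section
/- Let n ≥ 4 be an integer such that p = n − 1 is an odd prime number, and assume that f_{1,n}(X), regarded as a polynomial over ℚ, is irreducible. Let K_n be the splitting field of f_{1,n} over ℚ and G_n = Gal(K_n/ℚ) its Galois group (the group of ℚ-algebra automorphisms of K_n). Then G_n is not abelian: there exist σ, τ ∈ G_n with σ∘τ ≠ τ∘σ. -/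
open Polynomial

/-- `f1Q n = X^(n-1) + 2 X^(n-2) + ⋯ + (n-1) X + n = Σ_{k=1}^n k · X^(n-k)` over `ℚ`. -/
noncomputable def f1Q (n : ℕ) : Polynomial ℚ :=
  ∑ k ∈ Finset.Icc 1 n, C (k : ℚ) * X ^ (n - k)

lemma f1Q_succ (n : ℕ) : f1Q (n+1) = X * f1Q n + C ((n:ℚ)+1) := by
  unfold f1Q
  rw [Finset.sum_Icc_succ_top (by omega : 1 ≤ n+1), Finset.mul_sum]
  congr 1
  · apply Finset.sum_congr rfl
    intro k hk
    have hk' : k ≤ n := (Finset.mem_Icc.mp hk).2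
    rw [show n+1-k = (n-k)+1 by omega, pow_succ]
    ring
  · rw [Nat.sub_self, pow_zero, mul_one]
    push_cast
    ring

lemma keyid (n : ℕ) : (X - 1)^2 * f1Q n = X^(n+1) - C ((n:ℚ)+1) * X + C (n:ℚ) := by
  induction n with
  | zero =>
      have : f1Q 0 = 0 := by unfold f1Q; simp
      rw [this]
      simp
  | succ n ih =>
      rw [f1Q_succ, mul_add, show (X-1)^2 * (X * f1Q n) = X * ((X-1)^2 * f1Q n) by ring, ih]
      push_cast
      simp only [C_add, C_1, Polynomial.C_eq_natCast]
      ring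

lemma f1Q_natDegree (n : ℕ) (hn : 1 ≤ n) (hne : f1Q n ≠ 0) : (f1Q n).natDegree = n - 1 := by
  have h1 : ((X:ℚ[X])^(n+1) - C ((n:ℚ)+1) * X + C (n:ℚ)).natDegree = n+1 := by
    compute_degree!
    simp [show n ≠ 0 by omega]
  have hXne : ((X:ℚ[X]) - 1) ≠ 0 := fun hc => by simpa using congrArg (eval 0) hc
  have hdeg2 : (((X:ℚ[X]) - 1)^2).natDegree = 2 := by compute_degree!
  have h2 := congrArg natDegree (keyid n)
  rw [natDegree_mul (pow_ne_zero _ hXne) hne, h1, hdeg2] at h2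
  omega

lemma aeval_key (n : ℕ) (x : ℝ) :
    (x - 1)^2 * (aeval x) (f1Q n) = x^(n+1) - ((n:ℝ)+1)*x + (n:ℝ) := by
  have h := congrArg (aeval x) (keyid n)
  simpa using h

lemma root_lt (n : ℕ) (hn : 2 ≤ n) (hev : Even n) {x : ℝ}
    (hx : (aeval x) (f1Q n) = 0) : x < -1 := by
  have hn2 : (2:ℝ) ≤ (n:ℝ) := by exact_mod_cast hn
  by_contra h
  push_neg at h
  rcases le_or_gt 0 x with h0 | h0
  · have hb : (n:ℝ) ≤ (aeval x) (f1Q n) := by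
      rw [f1Q, map_sum]
      simp only [map_mul, aeval_C, map_pow, aeval_X]
      calc (n:ℝ) = (n:ℝ) * x^(n-n) := by rw [Nat.sub_self, pow_zero, mul_one]
      _ ≤ ∑ k ∈ Finset.Icc 1 n, (k:ℝ) * x^(n-k) := by
          apply Finset.single_le_sum (f := fun k : ℕ => (k:ℝ) * x^(n-k))
          · intro i _
            positivity
          · exact Finset.mem_Icc.mpr ⟨by omega, le_rfl⟩
    rw [hx] at hb
    linarith
  · have hg : x^(n+1) - ((n:ℝ)+1)*x + (n:ℝ) = 0 := by
      rw [← aeval_key, hx, mul_zero]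
    have h1 : x^n ≤ 1 := by
      rw [← hev.pow_abs]
      exact pow_le_one₀ (abs_nonneg x) (abs_le.mpr ⟨h, by linarith⟩)
    have h3 : x^(n+1) = x * x^n := by ring
    have h4 : 0 ≤ (-x) * (1 - x^n) := mul_nonneg (by linarith) (by linarith)
    nlinarith

lemma g_mono (n : ℕ) (hn : 1 ≤ n) (hev : Even n) {x y : ℝ} (hx : x < -1) (hy : y < -1)
    (hxy : x < y) : x^(n+1) - ((n:ℝ)+1)*x < y^(n+1) - ((n:ℝ)+1)*y := by
  have key := geom_sum₂_mul y x (n+1)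
  simp only [Nat.add_sub_cancel] at key
  have hterm : ∀ i, i ≤ n → (1:ℝ) ≤ y^i * x^(n-i) := by
    intro i hi
    have h1 : (-1:ℝ)^i * ((-1:ℝ)^(n-i)) = 1 := by
      rw [← pow_add, show i + (n-i) = n by omega, hev.neg_one_pow]
    have h2 : y^i * x^(n-i) = (-y)^i * (-x)^(n-i) := by
      calc y^i * x^(n-i) = ((-1:ℝ)^i * (-1:ℝ)^(n-i)) * (y^i * x^(n-i)) := by rw [h1, one_mul]
      _ = (-y)^i * (-x)^(n-i) := by rw [neg_pow, neg_pow]; ring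
    rw [h2]
    have := one_le_pow₀ (by linarith : (1:ℝ) ≤ -y) (n := i)
    have := one_le_pow₀ (by linarith : (1:ℝ) ≤ -x) (n := n-i)
    nlinarith
  have hsum : (n:ℝ)+1 < ∑ i ∈ Finset.range (n+1), y^i * x^(n-i) := by
    have hlt := Finset.sum_lt_sum (f := fun _ : ℕ => (1:ℝ))
      (g := fun i => y^i * x^(n-i)) (s := Finset.range (n+1))
      (fun i hi => hterm i (Nat.lt_succ_iff.mp (Finset.mem_range.mp hi)))
      ⟨n, Finset.self_mem_range_succ n, by
        show (1:ℝ) < y^n * x^(n-n)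
        rw [Nat.sub_self, pow_zero, mul_one, ← hev.pow_abs]
        exact one_lt_pow₀ (by rw [abs_of_neg (by linarith)]; linarith) (by omega)⟩
    simpa using hlt
  have hyx : 0 < y - x := by linarith
  nlinarith [key]

lemma root_unique (n : ℕ) (hn : 2 ≤ n) (hev : Even n) {x y : ℝ}
    (hx : (aeval x) (f1Q n) = 0) (hy : (aeval y) (f1Q n) = 0) : x = y := by
  have hx1 := root_lt n hn hev hx
  have hy1 := root_lt n hn hev hy
  have gx : x^(n+1) - ((n:ℝ)+1)*x + (n:ℝ) = 0 := by rw [← aeval_key, hx, mul_zero]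
  have gy : y^(n+1) - ((n:ℝ)+1)*y + (n:ℝ) = 0 := by rw [← aeval_key, hy, mul_zero]
  rcases lt_trichotomy x y with h | h | h
  · have := g_mono n (by omega) hev hx1 hy1 h
    linarith
  · exact h
  · have := g_mono n (by omega) hev hy1 hx1 h
    linarith

lemma exists_real_root (n : ℕ) (hn : 4 ≤ n) (hev : Even n) :
    ∃ x : ℝ, (aeval x) (f1Q n) = 0 := by
  have hn4 : (4:ℝ) ≤ (n:ℝ) := by exact_mod_cast hn
  set t : ℝ := -((n:ℝ)+1) with ht
  have hcont : ContinuousOn (fun x : ℝ => (aeval x) (f1Q n)) (Set.Icc t 0) :=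
    (f1Q n).continuous_aeval.continuousOn
  have hF0 : (0:ℝ) ≤ (aeval (0:ℝ)) (f1Q n) := by
    rw [f1Q, map_sum]
    simp only [map_mul, aeval_C, map_pow, aeval_X]
    apply Finset.sum_nonneg
    intro i _
    positivity
  have hFt : (aeval t) (f1Q n) ≤ 0 := by
    have hkey := aeval_key n t
    have hodd : Odd (n+1) := Even.add_one hev
    have htp : t^(n+1) = -(((n:ℝ)+1)^(n+1)) := by
      rw [ht, hodd.neg_pow]
    have h5 : ((n:ℝ)+1)^3 ≤ ((n:ℝ)+1)^(n+1) :=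
      pow_le_pow_right₀ (by linarith) (by omega)
    have h6 : (0:ℝ) < (t-1)^2 := by rw [ht]; nlinarith
    have h7 : ((n:ℝ)+1)*t = -(((n:ℝ)+1)^2) := by rw [ht]; ring
    nlinarith [hkey, htp, h5, h6, h7]
  have := intermediate_value_Icc (by linarith : t ≤ (0:ℝ)) hcont
  obtain ⟨x, _, hx⟩ := this ⟨hFt, hF0⟩
  exact ⟨x, hx⟩

attribute [local instance] Polynomial.Gal.splits_ℚ_ℂ


/-- If `n ≥ 4`, `p = n − 1` is an odd prime, and `f1Q n` is irreducible over `ℚ`,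
then the Galois group of the splitting field of `f1Q n` over `ℚ` is not abelian. -/
theorem stmt10 (n : ℕ) (hn : 4 ≤ n) (hp : (n - 1).Prime) (hodd : Odd (n - 1))
    (hirr : Irreducible (f1Q n)) :
    ∃ σ τ : (f1Q n).Gal, σ * τ ≠ τ * σ := by
  by_contra hcon
  push_neg at hcon
  have hev : Even n := by
    obtain ⟨k, hk⟩ := hodd
    exact ⟨k + 1, by omega⟩
  have hfne : f1Q n ≠ 0 := hirr.ne_zero
  -- a real root
  obtain ⟨r, hr⟩ := exists_real_root n hn hev
  have hrC : (algebraMap ℝ ℂ r) ∈ (f1Q n).rootSet ℂ := by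
    rw [mem_rootSet]
    exact ⟨hfne, by rw [aeval_algebraMap_apply, hr, map_zero]⟩
  set x₀ : (f1Q n).rootSet ℂ := ⟨algebraMap ℝ ℂ r, hrC⟩ with hx₀
  set conj : (f1Q n).Gal :=
    Polynomial.Gal.restrict (f1Q n) ℂ (Complex.conjAe.restrictScalars ℚ) with hconj
  have hfix : conj • x₀ = x₀ := by
    apply Subtype.ext
    rw [hconj, Polynomial.Gal.restrict_smul]
    show (Complex.conjAe.restrictScalars ℚ) (algebraMap ℝ ℂ r) = algebraMap ℝ ℂ r
    simp [Complex.conj_ofReal]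
  haveI := Polynomial.Gal.galAction_isPretransitive (f1Q n) ℂ hirr
  have hallfix : ∀ z : (f1Q n).rootSet ℂ, (z : ℂ).im = 0 := by
    intro z
    obtain ⟨σ, hσ⟩ := MulAction.exists_smul_eq (f1Q n).Gal x₀ z
    have hz : conj • z = z := by
      rw [← hσ, ← mul_smul, hcon conj σ, mul_smul, hfix]
    have h2 := Polynomial.Gal.restrict_smul (Complex.conjAe.restrictScalars ℚ) z
    rw [← hconj, hz] at h2
    have : (starRingEnd ℂ) (z : ℂ) = z := by
      simpa using h2.symm
    rwa [Complex.conj_eq_iff_im] at this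
  have hkey : ∀ z : (f1Q n).rootSet ℂ, (z : ℂ) = algebraMap ℝ ℂ (z : ℂ).re := by
    intro z
    have him := hallfix z
    apply Complex.ext <;> simp [him]
  have hroot : ∀ z : (f1Q n).rootSet ℂ, (aeval (z : ℂ).re) (f1Q n) = 0 := by
    intro z
    have hz := (mem_rootSet.mp z.2).2
    rw [hkey z, aeval_algebraMap_eq_zero_iff] at hz
    exact hz
  have hsep : (f1Q n).Separable := hirr.separable
  have hcard : Fintype.card ((f1Q n).rootSet ℂ) = n - 1 := by
    rw [card_rootSet_eq_natDegree hsep (IsAlgClosed.splits _),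
      f1Q_natDegree n (by omega) hfne]
  have h2lt : 1 < Fintype.card ((f1Q n).rootSet ℂ) := by rw [hcard]; omega
  obtain ⟨z₁, z₂, hne12⟩ := Fintype.exists_pair_of_one_lt_card h2lt
  have heq := root_unique n (by omega) hev (hroot z₁) (hroot z₂)
  exact hne12 (Subtype.ext (by rw [hkey z₁, hkey z₂, heq]))
end
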